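/- arXiv:cs/0610137 — 2 statements merged into one kernel-verified Lean document; each statement's English description precedes it below -/
import Mathlib

section
/- If the reads of K are included in the reads of K', then K ⊒ K' in the weak atomic preorder; that is, for every state σ, if ⟨K'⟩_{σ;ε} ⇒ ⟨end⟩_{σ;δ'} then ⟨K⟩_{σ;ε} ⇒ ⟨end⟩_{σ;δ} for some δ. -/
/-- Actions: reads and writes of names. -/
inductive Act (N : Type*) where
  | rd (a : N)
  | wt (a : N)

/-- Multiset of names written in a log. -/
def Wl {N : Type*} : List (Act N) → Multiset N
  | [] => 0
  | .wt a :: δ => Wl δ + {a}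
  | .rd _ :: δ => Wl δ

/-- Multiset of names read in a log. -/
def Rl {N : Type*} : List (Act N) → Multiset N
  | [] => 0
  | .rd a :: δ => Rl δ + {a}
  | .wt _ :: δ => Rl δ

/-- Atomic expressions. -/
inductive Expr (N : Type*) where
  | done
  | retry
  | rd (a : N) (M : Expr N)
  | wt (a : N) (M : Expr N)
  | orElse (M₁ M₂ : Expr N)

/-- Ongoing atomic expressions. -/
inductive Ong (N : Type*) where
  | block (M : Expr N) (σ : Multiset N) (δ : List (Act N))
  | orElse (A B : Ong N)

/-- One-step reduction of ongoing expressions. -/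
inductive Step {N : Type*} : Ong N → Ong N → Prop where
  | rdOk {a : N} {M σ δ} (h : Rl δ + {a} ≤ σ) :
      Step (.block (.rd a M) σ δ) (.block M σ (δ ++ [.rd a]))
  | rdFail {a : N} {M σ δ} (h : ¬ Rl δ + {a} ≤ σ) :
      Step (.block (.rd a M) σ δ) (.block .retry σ δ)
  | wr {a : N} {M σ δ} :
      Step (.block (.wt a M) σ δ) (.block M σ (δ ++ [.wt a]))
  | orE {M₁ M₂ : Expr N} {σ δ} :
      Step (.block (.orElse M₁ M₂) σ δ) (.orElse (.block M₁ σ δ) (.block M₂ σ δ))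
  | orFail {σ : Multiset N} {δ B} : Step (.orElse (.block .retry σ δ) B) B
  | orEnd {σ : Multiset N} {δ B} : Step (.orElse (.block .done σ δ) B) (.block .done σ δ)
  | congL {A A' B : Ong N} (h : Step A A') : Step (.orElse A B) (.orElse A' B)
  | congR {A B B' : Ong N} (h : Step B B') : Step (.orElse A B) (.orElse A B')

/-- Multi-step reduction. -/
def Steps {N : Type*} : Ong N → Ong N → Prop := Relation.ReflTransGen Step

/-- Logs with the same effect on state σ. -/
def EffEq {N : Type*} [DecidableEq N] (σ : Multiset N) (δ δ' : List (Act N)) : Prop :=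
  σ - Rl δ + Wl δ = σ - Rl δ' + Wl δ'

/-- Weak atomic equivalence. -/
def AEq {N : Type*} [DecidableEq N] (M M' : Expr N) : Prop :=
  ∀ σ : Multiset N,
    ((∃ δ, Steps (.block M σ []) (.block .retry σ δ)) ∧
     (∃ δ', Steps (.block M' σ []) (.block .retry σ δ'))) ∨
    (∃ δ δ', Steps (.block M σ []) (.block .done σ δ) ∧
             Steps (.block M' σ []) (.block .done σ δ') ∧ EffEq σ δ δ')

/-- Prefixing an action onto an expression. -/
def pre {N : Type*} : Act N → Expr N → Expr N
  | .rd a, M => .rd a M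
  | .wt a, M => .wt a M

/-- The pure sequence expression α₁.….αₙ.end. -/
def seq {N : Type*} (K : List (Act N)) : Expr N := K.foldr pre .done

/-- Right-nested orElse of a nonempty list of expressions. -/
def ors {N : Type*} : Expr N → List (Expr N) → Expr N
  | M, [] => M
  | M, M' :: rest => .orElse M (ors M' rest)

lemma Rl_append {N : Type*} (δ δ' : List (Act N)) : Rl (δ ++ δ') = Rl δ + Rl δ' := by
  induction δ with
  | nil => simp [Rl]
  | cons a δ ih =>
    cases a with
    | rd a => simp [Rl, ih]; abel
    | wt a => simp [Rl, ih]

lemma retry_stuck {N : Type*} {σ : Multiset N} {δ A} :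
    ¬ Step (Ong.block (.retry) σ δ) A := by intro h; cases h

lemma seq_runs {N : Type*} (K : List (Act N)) :
    ∀ δ : List (Act N), ∀ σ, Rl δ + Rl K ≤ σ →
      Steps (.block (seq K) σ δ) (.block .done σ (δ ++ K)) := by
  induction K with
  | nil => intro δ σ _; simp [seq]; exact Relation.ReflTransGen.refl
  | cons a K ih =>
    intro δ σ h
    cases a with
    | rd a =>
      have h1 : Rl δ + {a} ≤ σ := by
        refine le_trans ?_ h
        have : (Rl (Act.rd a :: K) : Multiset N) = Rl K + {a} := rfl
        rw [this]
        exact add_le_add le_rfl le_add_self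
      refine Relation.ReflTransGen.head (Step.rdOk h1) ?_
      have h2 : Rl (δ ++ [Act.rd a]) + Rl K ≤ σ := by
        rw [Rl_append]
        have : (Rl [Act.rd a] : Multiset N) = {a} := by simp [Rl]
        rw [this]
        have : (Rl (Act.rd a :: K) : Multiset N) = Rl K + {a} := rfl
        rw [this] at h
        calc Rl δ + {a} + Rl K = Rl δ + (Rl K + {a}) := by abel
        _ ≤ σ := h
      have := ih (δ ++ [Act.rd a]) σ h2
      simpa [Steps, seq] using this
    | wt a =>
      refine Relation.ReflTransGen.head Step.wr ?_
      have h2 : Rl (δ ++ [Act.wt a]) + Rl K ≤ σ := by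
        rw [Rl_append]
        have : (Rl [Act.wt a] : Multiset N) = 0 := rfl
        rw [this]; simpa [Rl] using h
      have := ih (δ ++ [Act.wt a]) σ h2
      simpa [Steps, seq] using this

lemma seq_done_reads {N : Type*} (K : List (Act N)) :
    ∀ δ : List (Act N), ∀ σ δ'', Rl δ ≤ σ →
      Steps (.block (seq K) σ δ) (.block .done σ δ'') → Rl δ + Rl K ≤ σ := by
  induction K with
  | nil =>
    intro δ σ δ'' hδ _
    simpa [Rl] using hδ
  | cons a K ih =>
    intro δ σ δ'' hδ hs
    cases a with
    | rd a =>
      rcases hs.cases_head with heq | ⟨c, hstep, hrest⟩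
      · exact absurd heq (by simp [seq, pre])
      · cases hstep with
        | rdOk h =>
          have h2 : Rl (δ ++ [Act.rd a]) ≤ σ := by
            rw [Rl_append]; simpa [Rl] using h
          have := ih (δ ++ [Act.rd a]) σ δ'' h2 hrest
          rw [Rl_append] at this
          have hr : (Rl (Act.rd a :: K) : Multiset N) = Rl K + {a} := rfl
          rw [hr]
          calc Rl δ + (Rl K + {a}) = Rl δ + Rl [Act.rd a] + Rl K := by
                simp [Rl]; abel
          _ ≤ σ := this
        | rdFail h =>
          exfalso
          rcases hrest.cases_head with heq | ⟨c, hstep, _⟩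
          · exact absurd heq (by simp)
          · exact retry_stuck hstep
    | wt a =>
      rcases hs.cases_head with heq | ⟨c, hstep, hrest⟩
      · exact absurd heq (by simp [seq, pre])
      · cases hstep with
        | wr =>
          have h2 : Rl (δ ++ [Act.wt a]) ≤ σ := by
            rw [Rl_append]; simpa [Rl] using hδ
          have := ih (δ ++ [Act.wt a]) σ δ'' h2 hrest
          rw [Rl_append] at this
          simpa [Rl] using this

/-- If R(K) ⊆ R(K') then K ⊒ K': for every state σ, whenever ⟨K'⟩_{σ;ε} ends,
⟨K⟩_{σ;ε} ends as well. -/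
theorem stmt7 {N : Type*} (K K' : List (Act N)) (hR : Rl K ≤ Rl K') :
    ∀ σ : Multiset N,
      (∃ δ', Steps (.block (seq K') σ []) (.block .done σ δ')) →
      ∃ δ, Steps (.block (seq K) σ []) (.block .done σ δ) := by
  intro σ ⟨δ', hδ'⟩
  have h' : Rl ([] : List (Act N)) + Rl K' ≤ σ :=
    seq_done_reads K' [] σ δ' (by simp [Rl]) hδ'
  have h : Rl ([] : List (Act N)) + Rl K ≤ σ := by
    simp [Rl] at h' ⊢; exact le_trans hR h'
  exact ⟨[] ++ K, seq_runs K [] σ h⟩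
end

section
/- Action prefix distributes over orElse up to weak atomic equivalence: α.(M orElse N) ≈ (α.M) orElse (α.N). -/
/-- Deterministic evaluator: `inl δ'` means done with log `δ'`, `inr δ'` means retry. -/
def evalE {N : Type*} [DecidableEq N] : Expr N → Multiset N → List (Act N) →
    (List (Act N)) ⊕ (List (Act N))
  | .done, _, δ => .inl δ
  | .retry, _, δ => .inr δ
  | .rd a M, σ, δ => if Rl δ + {a} ≤ σ then evalE M σ (δ ++ [.rd a]) else .inr δ
  | .wt a M, σ, δ => evalE M σ (δ ++ [.wt a])
  | .orElse M₁ M₂, σ, δ =>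
      match evalE M₁ σ δ with
      | .inl δ' => .inl δ'
      | .inr _ => evalE M₂ σ δ

lemma stepsOrL {N : Type*} {A A' B : Ong N} (h : Steps A A') :
    Steps (.orElse A B) (.orElse A' B) :=
  Relation.ReflTransGen.lift (fun A => Ong.orElse A B) (fun _ _ h => Step.congL h) _ _ h

lemma evalE_steps {N : Type*} [DecidableEq N] (M : Expr N) (σ : Multiset N) :
    ∀ δ : List (Act N),
    (∀ δ', evalE M σ δ = .inl δ' → Steps (.block M σ δ) (.block .done σ δ')) ∧
    (∀ δ', evalE M σ δ = .inr δ' → Steps (.block M σ δ) (.block .retry σ δ')) := by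
  induction M with
  | done =>
    intro δ
    refine ⟨fun δ' h => ?_, fun δ' h => ?_⟩ <;> simp [evalE] at h <;> subst h <;> exact .refl
  | retry =>
    intro δ
    refine ⟨fun δ' h => ?_, fun δ' h => ?_⟩ <;> simp [evalE] at h <;> subst h <;> exact .refl
  | rd a M ih =>
    intro δ
    by_cases hle : Rl δ + {a} ≤ σ
    · refine ⟨fun δ' h => ?_, fun δ' h => ?_⟩ <;> simp [evalE, hle] at h
      · refine Relation.ReflTransGen.head (Step.rdOk hle) ?_
        exact (ih (δ ++ [Act.rd a])).1 δ' h
      · refine Relation.ReflTransGen.head (Step.rdOk hle) ?_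
        exact (ih (δ ++ [Act.rd a])).2 δ' h
    · refine ⟨fun δ' h => ?_, fun δ' h => ?_⟩ <;> simp [evalE, hle] at h
      subst h; exact .single (Step.rdFail hle)
  | wt a M ih =>
    intro δ
    refine ⟨fun δ' h => ?_, fun δ' h => ?_⟩ <;> simp [evalE] at h
    · refine Relation.ReflTransGen.head Step.wr ?_
      exact (ih (δ ++ [Act.wt a])).1 δ' h
    · refine Relation.ReflTransGen.head Step.wr ?_
      exact (ih (δ ++ [Act.wt a])).2 δ' h
  | orElse M₁ M₂ ih₁ ih₂ =>
    intro δ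
    rcases h1 : evalE M₁ σ δ with δ₁ | δ₁
    · -- M₁ succeeds
      refine ⟨fun δ' h => ?_, fun δ' h => ?_⟩ <;> simp [evalE, h1] at h
      subst h
      exact .head Step.orE (Relation.ReflTransGen.trans
        (stepsOrL ((ih₁ δ).1 δ₁ h1)) (.single Step.orEnd))
    · -- M₁ retries, result is evalE M₂
      have pref : Steps (Ong.block (.orElse M₁ M₂) σ δ) (.block M₂ σ δ) :=
        .head Step.orE (Relation.ReflTransGen.trans
          (stepsOrL ((ih₁ δ).2 δ₁ h1)) (.single Step.orFail))
      refine ⟨fun δ' h => ?_, fun δ' h => ?_⟩ <;> simp [evalE, h1] at h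
      · exact pref.trans ((ih₂ δ).1 δ' h)
      · exact pref.trans ((ih₂ δ).2 δ' h)

lemma evalE_eq {N : Type*} [DecidableEq N] (α : Act N) (M M' : Expr N) (σ : Multiset N) :
    evalE (pre α (.orElse M M')) σ [] = evalE (.orElse (pre α M) (pre α M')) σ [] := by
  cases α with
  | rd a =>
    by_cases hle : Rl ([] : List (Act N)) + {a} ≤ σ
    · simp only [pre, evalE, hle, if_true]
    · simp [pre, evalE, hle]
  | wt a =>
    simp only [pre, evalE]

/-- Action prefix distributes over orElse: α.(M orElse N) ≈ (α.M) orElse (α.N). -/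
theorem stmt9 {N : Type*} [DecidableEq N] (α : Act N) (M M' : Expr N) :
    AEq (pre α (.orElse M M')) (.orElse (pre α M) (pre α M')) := by
  intro σ
  have he := evalE_eq α M M' σ
  rcases h : evalE (pre α (.orElse M M')) σ [] with δ | δ
  · right
    exact ⟨δ, δ, (evalE_steps _ σ []).1 δ h,
      (evalE_steps _ σ []).1 δ (he ▸ h), rfl⟩
  · left
    exact ⟨⟨δ, (evalE_steps _ σ []).2 δ h⟩,
      ⟨δ, (evalE_steps _ σ []).2 δ (he ▸ h)⟩⟩
end
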